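/- arXiv:1606.02577 — 4 statements merged into one kernel-verified Lean document; each statement's English description precedes it below -/
import Mathlib

section
/- Let f and g be two binary operations on a set D that are both conservative (f(x,y), g(x,y) ∈ {x,y}) and commutative, and satisfy f(x,y) ≠ g(x,y) whenever x ≠ y. Then the ternary operation h(x,y,z) = f(f(g(x,y), g(x,z)), g(y,z)) is a majority operation, i.e., h(x,x,y) = h(x,y,x) = h(y,x,x) = x for all x, y ∈ D. -/
theorem stp_gives_majority {D : Type*} (f g : D → D → D)
    (hfcons : ∀ x y, f x y = x ∨ f x y = y)
    (hgcons : ∀ x y, g x y = x ∨ g x y = y)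
    (hfcomm : ∀ x y, f x y = f y x)
    (hgcomm : ∀ x y, g x y = g y x)
    (hne : ∀ x y, x ≠ y → f x y ≠ g x y)
    (h : D → D → D → D)
    (hh : ∀ x y z, h x y z = f (f (g x y) (g x z)) (g y z)) :
    ∀ x y, h x x y = x ∧ h x y x = x ∧ h y x x = x := by
  intro x y
  have hfxx : ∀ a : D, f a a = a := fun a => (hfcons a a).elim id id
  have hgxx : ∀ a : D, g a a = a := fun a => (hgcons a a).elim id id
  by_cases hxy : x = y
  · subst hxy
    simp [hh, hfxx, hgxx]
  · rcases hgcons x y with hg | hg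
    · have hg' : g y x = x := (hgcomm y x).trans hg
      refine ⟨?_, ?_, ?_⟩ <;>
        simp [hh, hfxx, hgxx, hg, hg']
    · have hf : f x y = x := (hfcons x y).resolve_right
        (fun h1 => hne x y hxy (h1.trans hg.symm))
      have hg' : g y x = y := (hgcomm y x).trans hg
      refine ⟨?_, ?_, ?_⟩ <;>
        simp [hh, hfxx, hgxx, hg, hg', hf, hfcomm y x]
end

section
/- Let D, P ⊆ {2-element subsets of D}, and suppose f, g : D² → D satisfy the multiset identity {f(x,y), g(x,y)} = {x,y} for all x,y, and that for every {a,b} ∈ P the restrictions f|_{a,b}, g|_{a,b} are commutative with f(x,y) ≠ g(x,y) when x ≠ y, while for every 2-element subset {a,b} ∉ P the operation p(x,y,z) := f(f(g(y,x),g(x,z)),g(y,z)) restricted to {a,b} is a projection (the first or second ternary projection). Then for all {a,b} ∈ P and x,y ∈ {a,b}: p(x,x,y) = p(x,y,x) = p(y,x,x) = x. -/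
theorem stp_part_gives_majority_on_P {D : Type*} [DecidableEq D]
    (P : Set (Finset D)) (hP2 : ∀ s ∈ P, s.card = 2)
    (f g : D → D → D)
    (hms : ∀ x y, (f x y = x ∧ g x y = y) ∨ (f x y = y ∧ g x y = x))
    (p : D → D → D → D)
    (hp : ∀ x y z, p x y z = f (f (g y x) (g x z)) (g y z))
    (hin : ∀ a b : D, ({a, b} : Finset D) ∈ P →
      ∀ x ∈ ({a, b} : Set D), ∀ y ∈ ({a, b} : Set D),
        f x y = f y x ∧ g x y = g y x ∧ (x ≠ y → f x y ≠ g x y))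
    (hout : ∀ a b : D, a ≠ b → ({a, b} : Finset D) ∉ P →
      (∀ x ∈ ({a, b} : Set D), ∀ y ∈ ({a, b} : Set D), ∀ z ∈ ({a, b} : Set D),
          p x y z = x) ∨
      (∀ x ∈ ({a, b} : Set D), ∀ y ∈ ({a, b} : Set D), ∀ z ∈ ({a, b} : Set D),
          p x y z = y)) :
    ∀ a b : D, ({a, b} : Finset D) ∈ P →
      ∀ x ∈ ({a, b} : Set D), ∀ y ∈ ({a, b} : Set D),
        p x x y = x ∧ p x y x = x ∧ p y x x = x := by
  intro a b hab x hx y hy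
  have hd : ∀ z : D, f z z = z ∧ g z z = z := fun z => by
    rcases hms z z with ⟨h1, h2⟩ | ⟨h1, h2⟩ <;> exact ⟨h1, h2⟩
  obtain ⟨hc1, hc2, hc3⟩ := hin a b hab x hx y hy
  simp only [hp]
  rcases eq_or_ne x y with h | h
  · subst h
    simp [(hd x).1, (hd x).2]
  · rcases hms x y with ⟨h1, h2⟩ | ⟨h1, h2⟩ <;>
      simp only [← hc1, ← hc2, (hd x).1, (hd x).2, (hd y).1, (hd y).2, h1, h2] <;>
      simp [h1, h2]
end

section
/- Let I be a finite index set and for each i ∈ I let Φ_i : D^{r_i} → ℚ∪{∞} be a weighted relation and x_i a scope; let λ assign to each i a probability distribution λ_i over assignments σ : X_i → D supported on feasible assignments. Let ω be a probability distribution over m-ary operations f : D^m → D such that for each i, E_{f∼ω}[Φ_i(f(y_1,…,y_m))] ≤ (1/m)Σ_j Φ_i(y_j) for all feasible y_1,…,y_m. Define λ_i^ω(σ) = Pr_{f∼ω, σ_1,…,σ_m∼λ_i}[f∘(σ_1,…,σ_m) = σ]. Then for every i, Σ_σ λ_i^ω(σ)Φ_i(σ(x_i)) ≤ Σ_σ λ_i(σ)Φ_i(σ(x_i)).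 -/
open Finset

private lemma wt_mul_add (q : ℚ) (x y : WithTop ℚ) :
    (q : WithTop ℚ) * (x + y) = q * x + q * y := by
  rcases eq_or_ne q 0 with rfl | hq
  · simp
  rcases eq_or_ne x ⊤ with rfl | hx
  · simp [WithTop.mul_top', hq, top_add]
  rcases eq_or_ne y ⊤ with rfl | hy
  · simp [WithTop.mul_top', hq, add_top, WithTop.add_eq_top, WithTop.mul_eq_top_iff, hx]
  lift x to ℚ using hx; lift y to ℚ using hy
  rw [← WithTop.coe_add, ← WithTop.coe_mul, ← WithTop.coe_mul, ← WithTop.coe_mul,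
    ← WithTop.coe_add, mul_add]

private lemma wt_mul_sum {α : Type*} (s : Finset α) (q : ℚ) (g : α → WithTop ℚ) :
    (q : WithTop ℚ) * ∑ x ∈ s, g x = ∑ x ∈ s, (q : WithTop ℚ) * g x := by
  induction s using Finset.cons_induction with
  | empty => simp
  | cons a s h ih => rw [Finset.sum_cons, Finset.sum_cons, wt_mul_add, ih]

private lemma wt_add_mul (a b : ℚ) (ha : 0 ≤ a) (hb : 0 ≤ b) (x : WithTop ℚ) :
    ((a + b : ℚ) : WithTop ℚ) * x = a * x + b * x := by
  rcases eq_or_ne x ⊤ with rfl | hx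
  · rcases eq_or_ne a 0 with rfl | hA
    · simp [WithTop.mul_top']
    · have h2 : a + b ≠ 0 := by positivity
      rw [WithTop.mul_top (by exact_mod_cast h2), WithTop.mul_top (by exact_mod_cast hA), top_add]
  lift x to ℚ using hx
  rw [← WithTop.coe_mul, ← WithTop.coe_mul, ← WithTop.coe_mul, ← WithTop.coe_add, add_mul]

private lemma wt_sum_mul {α : Type*} (s : Finset α) (c : α → ℚ) (hc : ∀ a ∈ s, 0 ≤ c a)
    (x : WithTop ℚ) :
    ((∑ a ∈ s, c a : ℚ) : WithTop ℚ) * x = ∑ a ∈ s, (c a : WithTop ℚ) * x := by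
  induction s using Finset.cons_induction with
  | empty => simp
  | cons a s h ih =>
    rw [Finset.sum_cons, Finset.sum_cons,
      wt_add_mul _ _ (hc a (mem_cons_self a s)) (Finset.sum_nonneg fun b hb => hc b (mem_cons_of_mem hb)),
      ih (fun b hb => hc b (mem_cons_of_mem hb))]

private lemma wt_mul_le_mul (q : ℚ) (hq : 0 ≤ q) {a b : WithTop ℚ} (h : a ≤ b) :
    (q : WithTop ℚ) * a ≤ (q : WithTop ℚ) * b := by
  rcases eq_or_ne q 0 with rfl | hq0
  · simp
  rcases eq_or_ne b ⊤ with rfl | hb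
  · simp [WithTop.mul_top', hq0]
  lift b to ℚ using hb
  have ha : a ≠ ⊤ := fun haa => by simp [haa] at h
  lift a to ℚ using ha
  rw [← WithTop.coe_mul, ← WithTop.coe_mul, WithTop.coe_le_coe]
  exact mul_le_mul_of_nonneg_left (WithTop.coe_le_coe.mp h) hq

private lemma rat_marginal {T : Type*} [Fintype T] [DecidableEq T] {m : ℕ}
    (g : T → ℚ) (hg1 : ∑ t, g t = 1) (j : Fin m) (σ : T) :
    ∑ σs : Fin m → T, (if σs j = σ then ∏ k, g (σs k) else 0) = g σ := by
  have key : ∀ σs : Fin m → T,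
      (if σs j = σ then ∏ k, g (σs k) else 0) =
        ∏ k, (fun k t => if k = j then (if t = σ then g t else 0) else g t) k (σs k) := by
    intro σs
    have hR : (∏ k, (fun k t => if k = j then (if t = σ then g t else 0) else g t) k (σs k)) =
        (if σs j = σ then g (σs j) else 0) * ∏ k ∈ ({j}ᶜ : Finset (Fin m)), g (σs k) := by
      rw [Fintype.prod_eq_mul_prod_compl j]
      congr 1
      · simp
      · exact Finset.prod_congr rfl fun k hk => by
          simp only [Finset.mem_compl, Finset.mem_singleton] at hk; simp [hk]
    rw [hR]
    by_cases h : σs j = σ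
    · rw [if_pos h, if_pos h, Fintype.prod_eq_mul_prod_compl j (fun k => g (σs k))]
    · rw [if_neg h, if_neg h, zero_mul]
  rw [Finset.sum_congr rfl (fun σs _ => key σs), ← Fintype.piFinset_univ,
    Finset.sum_prod_piFinset univ (fun k t => if k = j then (if t = σ then g t else 0) else g t),
    Fintype.prod_eq_mul_prod_compl j]
  simp only [if_pos rfl]
  have h2 : ∀ k ∈ ({j}ᶜ : Finset (Fin m)),
      (∑ t, if k = j then (if t = σ then g t else 0) else g t) = 1 := by
    intro k hk
    simp only [Finset.mem_compl, Finset.mem_singleton] at hk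
    simp [hk, hg1]
  rw [Finset.prod_congr rfl h2, Finset.prod_const_one, mul_one]
  simp

private lemma wt_avg {m : ℕ} (hm : 0 < m) (V : WithTop ℚ) :
    ((1 / m : ℚ) : WithTop ℚ) * ∑ _j : Fin m, V = V := by
  have hmne : (1 / m : ℚ) ≠ 0 := by positivity
  rcases eq_or_ne V ⊤ with rfl | hv
  · rw [show (∑ _j : Fin m, (⊤ : WithTop ℚ)) = ⊤ from WithTop.sum_eq_top.mpr
      ⟨⟨0, hm⟩, mem_univ _, rfl⟩, WithTop.mul_top (by exact_mod_cast hmne)]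
  · lift V to ℚ using hv
    rw [← WithTop.coe_sum, ← WithTop.coe_mul, Finset.sum_const, card_univ, Fintype.card_fin,
      nsmul_eq_mul]
    congr 1
    field_simp

private lemma wt_ite_nonneg (c : Prop) [Decidable c] (q : ℚ) (hq : 0 ≤ q) :
    0 ≤ if c then q else 0 := by split <;> simp [hq]

theorem averaging_by_fractional_polymorphism_does_not_increase_value
    {D : Type*} [Fintype D] [DecidableEq D]
    {I : Type*} [Fintype I] (X : I → Type*) [∀ i, Fintype (X i)] [∀ i, DecidableEq (X i)]
    (r : I → ℕ) (Φ : ∀ i, (Fin (r i) → D) → WithTop ℚ)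
    (xsc : ∀ i, Fin (r i) → X i)
    (lam : ∀ i, (X i → D) → ℚ)
    (hlam0 : ∀ i σ, 0 ≤ lam i σ) (hlam1 : ∀ i, ∑ σ : X i → D, lam i σ = 1)
    (hfeas : ∀ i (σ : X i → D), lam i σ ≠ 0 → Φ i (fun j => σ (xsc i j)) ≠ ⊤)
    {m : ℕ} (hm : 0 < m) (ω : ((Fin m → D) → D) → ℚ)
    (hω0 : ∀ f, 0 ≤ ω f) (hω1 : ∑ f, ω f = 1)
    (himp : ∀ i (ys : Fin m → (Fin (r i) → D)), (∀ j, Φ i (ys j) ≠ ⊤) →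
      ∑ f, (ω f : WithTop ℚ) * Φ i (fun l => f (fun j => ys j l)) ≤
        ((1 / m : ℚ) : WithTop ℚ) * ∑ j, Φ i (ys j))
    (lamω : ∀ i, (X i → D) → ℚ)
    (hlamω : ∀ i (σ : X i → D), lamω i σ =
      ∑ f, ∑ σs : Fin m → (X i → D),
        if (fun x => f (fun j => σs j x)) = σ then ω f * ∏ j, lam i (σs j) else 0) :
    ∀ i, ∑ σ : X i → D, (lamω i σ : WithTop ℚ) * Φ i (fun j => σ (xsc i j)) ≤
      ∑ σ : X i → D, (lam i σ : WithTop ℚ) * Φ i (fun j => σ (xsc i j)) := by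
  intro i
  have hPnn : ∀ σs : Fin m → (X i → D), (0:ℚ) ≤ ∏ j, lam i (σs j) :=
    fun σs => Finset.prod_nonneg fun j _ => hlam0 i (σs j)
  -- Step A: rewrite the left-hand side
  have hA : ∑ σ : X i → D, (lamω i σ : WithTop ℚ) * Φ i (fun j => σ (xsc i j)) =
      ∑ f, ∑ σs : Fin m → (X i → D),
        ((ω f * ∏ j, lam i (σs j) : ℚ) : WithTop ℚ) *
          Φ i (fun l => f fun j => σs j (xsc i l)) := by
    have e1 : ∀ σ : X i → D, (lamω i σ : WithTop ℚ) * Φ i (fun j => σ (xsc i j)) =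
        ∑ f, ∑ σs : Fin m → (X i → D),
          (if (fun x => f fun j => σs j x) = σ then
            ((ω f * ∏ j, lam i (σs j) : ℚ) : WithTop ℚ) * Φ i (fun j => σ (xsc i j)) else 0) := by
      intro σ
      have h1 : ∀ (f : (Fin m → D) → D) (σs : Fin m → (X i → D)),
          (0:ℚ) ≤ (if (fun x => f fun j => σs j x) = σ then ω f * ∏ j, lam i (σs j) else 0) :=
        fun f σs => wt_ite_nonneg _ _ (mul_nonneg (hω0 f) (hPnn σs))
      rw [hlamω i σ, wt_sum_mul univ _ (fun f _ => Finset.sum_nonneg fun σs _ => h1 f σs)]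
      refine Finset.sum_congr rfl fun f _ => ?_
      rw [wt_sum_mul univ _ (fun σs _ => h1 f σs)]
      refine Finset.sum_congr rfl fun σs _ => ?_
      by_cases h : (fun x => f fun j => σs j x) = σ
      · rw [if_pos h, if_pos h]
      · rw [if_neg h, if_neg h, WithTop.coe_zero, zero_mul]
    calc ∑ σ : X i → D, (lamω i σ : WithTop ℚ) * Φ i (fun j => σ (xsc i j))
        = ∑ σ : X i → D, ∑ f, ∑ σs : Fin m → (X i → D),
            (if (fun x => f fun j => σs j x) = σ then
              ((ω f * ∏ j, lam i (σs j) : ℚ) : WithTop ℚ) * Φ i (fun j => σ (xsc i j)) else 0) :=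
          Finset.sum_congr rfl fun σ _ => e1 σ
      _ = ∑ f, ∑ σ : X i → D, ∑ σs : Fin m → (X i → D), _ := Finset.sum_comm
      _ = ∑ f, ∑ σs : Fin m → (X i → D), ∑ σ : X i → D,
            (if (fun x => f fun j => σs j x) = σ then
              ((ω f * ∏ j, lam i (σs j) : ℚ) : WithTop ℚ) * Φ i (fun j => σ (xsc i j)) else 0) :=
          Finset.sum_congr rfl fun f _ => Finset.sum_comm
      _ = ∑ f, ∑ σs : Fin m → (X i → D),
            ((ω f * ∏ j, lam i (σs j) : ℚ) : WithTop ℚ) *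
              Φ i (fun l => f fun j => σs j (xsc i l)) := by
          refine Finset.sum_congr rfl fun f _ => Finset.sum_congr rfl fun σs _ => ?_
          rw [Finset.sum_ite_eq]
          simp
  rw [hA, Finset.sum_comm]
  have key : ∀ σs : Fin m → (X i → D),
      ∑ f, ((ω f * ∏ j, lam i (σs j) : ℚ) : WithTop ℚ) *
          Φ i (fun l => f fun j => σs j (xsc i l)) ≤
        ((∏ j, lam i (σs j) : ℚ) : WithTop ℚ) *
          (((1 / m : ℚ) : WithTop ℚ) * ∑ j, Φ i (fun l => σs j (xsc i l))) := by
    intro σs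
    by_cases hz : ∀ j, lam i (σs j) ≠ 0
    · have hys : ∀ j, Φ i (fun l => σs j (xsc i l)) ≠ ⊤ := fun j => hfeas i (σs j) (hz j)
      have himp' := himp i (fun j l => σs j (xsc i l)) hys
      have e2 : ∑ f, ((ω f * ∏ j, lam i (σs j) : ℚ) : WithTop ℚ) *
            Φ i (fun l => f fun j => σs j (xsc i l)) =
          ((∏ j, lam i (σs j) : ℚ) : WithTop ℚ) *
            ∑ f, (ω f : WithTop ℚ) * Φ i (fun l => f fun j => σs j (xsc i l)) := by
        rw [wt_mul_sum]
        refine Finset.sum_congr rfl fun f _ => ?_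
        rw [WithTop.coe_mul, mul_comm ((ω f : WithTop ℚ)) _, mul_assoc]
      rw [e2]
      exact wt_mul_le_mul _ (hPnn σs) himp'
    · push_neg at hz
      obtain ⟨j, hj⟩ := hz
      have hP : (∏ j, lam i (σs j)) = 0 := Finset.prod_eq_zero (mem_univ j) hj
      simp [hP]
  refine le_trans (Finset.sum_le_sum fun σs _ => key σs) (le_of_eq ?_)
  calc ∑ σs : Fin m → (X i → D),
        ((∏ j, lam i (σs j) : ℚ) : WithTop ℚ) *
          (((1 / m : ℚ) : WithTop ℚ) * ∑ j, Φ i (fun l => σs j (xsc i l)))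
      = ∑ σs : Fin m → (X i → D), ((1 / m : ℚ) : WithTop ℚ) *
          ∑ j, ((∏ k, lam i (σs k) : ℚ) : WithTop ℚ) * Φ i (fun l => σs j (xsc i l)) := by
        refine Finset.sum_congr rfl fun σs _ => ?_
        rw [mul_left_comm,
          wt_mul_sum univ (∏ k, lam i (σs k)) (fun j => Φ i (fun l => σs j (xsc i l)))]
    _ = ((1 / m : ℚ) : WithTop ℚ) * ∑ σs : Fin m → (X i → D),
          ∑ j, ((∏ k, lam i (σs k) : ℚ) : WithTop ℚ) * Φ i (fun l => σs j (xsc i l)) :=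
        (wt_mul_sum _ _ _).symm
    _ = ((1 / m : ℚ) : WithTop ℚ) * ∑ j : Fin m, ∑ σs : Fin m → (X i → D),
          ((∏ k, lam i (σs k) : ℚ) : WithTop ℚ) * Φ i (fun l => σs j (xsc i l)) := by
        rw [Finset.sum_comm]
    _ = ((1 / m : ℚ) : WithTop ℚ) * ∑ _j : Fin m,
          ∑ σ : X i → D, (lam i σ : WithTop ℚ) * Φ i (fun j => σ (xsc i j)) := by
        congr 1
        refine Finset.sum_congr rfl fun j _ => ?_
        calc ∑ σs : Fin m → (X i → D),
              ((∏ k, lam i (σs k) : ℚ) : WithTop ℚ) * Φ i (fun l => σs j (xsc i l))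
            = ∑ σs : Fin m → (X i → D), ∑ σ : X i → D,
                (if σs j = σ then
                  ((∏ k, lam i (σs k) : ℚ) : WithTop ℚ) * Φ i (fun l => σ (xsc i l)) else 0) := by
              refine Finset.sum_congr rfl fun σs _ => ?_
              rw [Finset.sum_ite_eq]
              simp
          _ = ∑ σ : X i → D, ∑ σs : Fin m → (X i → D),
                (if σs j = σ then
                  ((∏ k, lam i (σs k) : ℚ) : WithTop ℚ) * Φ i (fun l => σ (xsc i l)) else 0) :=
              Finset.sum_comm
          _ = ∑ σ : X i → D,
                ((∑ σs : Fin m → (X i → D), if σs j = σ then (∏ k, lam i (σs k)) else 0 : ℚ) :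
                  WithTop ℚ) * Φ i (fun l => σ (xsc i l)) := by
              refine Finset.sum_congr rfl fun σ _ => ?_
              rw [wt_sum_mul univ _ (fun σs _ => wt_ite_nonneg _ _ (hPnn σs))]
              refine Finset.sum_congr rfl fun σs _ => ?_
              by_cases h : σs j = σ
              · rw [if_pos h, if_pos h]
              · rw [if_neg h, if_neg h, WithTop.coe_zero, zero_mul]
          _ = ∑ σ : X i → D, (lam i σ : WithTop ℚ) * Φ i (fun j => σ (xsc i j)) := by
              refine Finset.sum_congr rfl fun σ _ => ?_
              rw [rat_marginal (lam i) (hlam1 i) j σ]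
    _ = ∑ σ : X i → D, (lam i σ : WithTop ℚ) * Φ i (fun j => σ (xsc i j)) := wt_avg hm _
end

section
/- For the torus instance I_n over a finite abelian group G, with S ⊆ V_x a set of vertex variables that excludes a cross and has no hole, the number of assignments on the induced variable set X̄ = Var(T_{n×n}[S]) satisfying all constraints of I_n whose scope lies in X̄ equals |G|^{C+H+V}, where C is the number of vertices in S, H the number of horizontal edge components, and V the number of vertical edge components of X̄. -/
section Aux

lemma zmod_val_add_one {n : ℕ} [NeZero n] (z : ZMod n) (h : z + 1 ≠ 0) :
    (z + 1).val = z.val + 1 := by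
  have hn : 0 < n := Nat.pos_of_ne_zero (NeZero.ne n)
  have hz : z.val < n := ZMod.val_lt z
  have hne : z.val + 1 ≠ n := by
    intro hEq
    apply h
    have : z = ((z.val : ℕ) : ZMod n) := by simp [ZMod.natCast_val, ZMod.cast_id]
    rw [this]
    have : ((z.val : ℕ) : ZMod n) + 1 = ((z.val + 1 : ℕ) : ZMod n) := by push_cast; ring
    rw [this, hEq, ZMod.natCast_self]
  have hlt : z.val + 1 < n := lt_of_le_of_ne hz hne
  have : z + 1 = ((z.val + 1 : ℕ) : ZMod n) := by push_cast; simp [ZMod.natCast_val, ZMod.cast_id]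
  rw [this, ZMod.val_natCast, Nat.mod_eq_of_lt hlt]

/-- Solutions to a "gradient" system along a graph are parametrized by one group element
per connected component. -/
noncomputable def potentialEquiv {V : Type*} {G : Type*} [AddCommGroup G]
    (Gr : SimpleGraph V) (R : V → V → Prop)
    (hR2 : ∀ v w, Gr.Adj v w → R v w ∨ R w v)
    (hRadj : ∀ v w, R v w → Gr.Adj v w)
    (δ : V → V → G) (P : V → G)
    (hP : ∀ v w, R v w → P w = P v + δ v w) :
    {h : V → G // ∀ v w, R v w → h w = h v + δ v w} ≃ (Gr.ConnectedComponent → G) where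
  toFun h K := h.1 K.out - P K.out
  invFun φ := ⟨fun v => φ (Gr.connectedComponentMk v) + P v, by
    intro v w hvw
    have hcc : Gr.connectedComponentMk w = Gr.connectedComponentMk v :=
      (SimpleGraph.ConnectedComponent.sound (hRadj v w hvw).reachable).symm
    show φ (Gr.connectedComponentMk w) + P w = (φ (Gr.connectedComponentMk v) + P v) + δ v w
    rw [hcc, hP v w hvw, add_assoc]⟩
  left_inv := by
    intro h
    have key : ∀ v w, Gr.Reachable v w → h.1 v - P v = h.1 w - P w := by
      intro v w hr
      obtain ⟨p⟩ := hr
      induction p with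
      | nil => rfl
      | cons hadj p ih =>
        rename_i a b cc
        have step : h.1 a - P a = h.1 b - P b := by
          rcases hR2 _ _ hadj with h' | h'
          · rw [h.2 _ _ h', hP _ _ h']; abel
          · rw [h.2 _ _ h', hP _ _ h']; abel
        rw [step, ih]
    apply Subtype.ext
    funext v
    have hout : Gr.connectedComponentMk ((Gr.connectedComponentMk v).out) =
        Gr.connectedComponentMk v := (Gr.connectedComponentMk v).out_eq
    have hreach := SimpleGraph.ConnectedComponent.exact hout
    have := key _ _ hreach
    simp only []
    rw [this]
    abel
  right_inv := by
    intro φ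
    funext K
    show φ (Gr.connectedComponentMk K.out) + P K.out - P K.out = φ K
    have hout : Gr.connectedComponentMk K.out = K := K.out_eq
    rw [hout]
    abel

end Aux

section HV

variable {G : Type*} [AddCommGroup G] {n : ℕ} [NeZero n]

/-- Horizontal case: given the vertex assignment, the valid horizontal edge assignments
are parametrized by one group element per horizontal component. -/
noncomputable def horizEquiv (c : ZMod n → ZMod n → G)
    (S HE : Set (ZMod n × ZMod n))
    (hHE : ∀ p : ZMod n × ZMod n, p ∈ HE ↔ p ∈ S ∧ (p.1, p.2 + 1) ∈ S)
    (b₀ : ZMod n) (hb₀ : ∀ a, (a, b₀) ∉ S)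
    (GH : SimpleGraph ↥HE)
    (hGH : ∀ e e' : ↥HE, GH.Adj e e' ↔ e ≠ e' ∧
      ((e' : ZMod n × ZMod n) = ((e : ZMod n × ZMod n).1, (e : ZMod n × ZMod n).2 + 1) ∨
       (e : ZMod n × ZMod n) = ((e' : ZMod n × ZMod n).1, (e' : ZMod n × ZMod n).2 + 1)))
    (va : ↥S → G) :
    {h : ↥HE → G // ∀ p : ZMod n × ZMod n, ∀ (h1 : p ∈ S) (h2 : p ∈ HE)
        (h3 : (p.1, p.2 + 1) ∈ HE),
      h ⟨(p.1, p.2 + 1), h3⟩ = h ⟨p, h2⟩ + va ⟨p, h1⟩ + c p.1 p.2} ≃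
    (GH.ConnectedComponent → G) := by
  classical
  set F : ZMod n × ZMod n → G :=
    fun p => (if hp : p ∈ S then va ⟨p, hp⟩ else 0) + c p.1 p.2 with hF
  set R : ↥HE → ↥HE → Prop :=
    fun e e' => (e' : ZMod n × ZMod n) =
      ((e : ZMod n × ZMod n).1, (e : ZMod n × ZMod n).2 + 1) with hR
  set P : ↥HE → G :=
    fun e => ∑ k ∈ Finset.range (((e : ZMod n × ZMod n).2 - b₀).val)
      , F ((e : ZMod n × ZMod n).1, b₀ + k) with hPdef
  have hSne : ∀ e : ↥HE, (e : ZMod n × ZMod n).2 ≠ b₀ := by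
    intro e hEq
    have heS : (e : ZMod n × ZMod n) ∈ S := ((hHE _).1 e.2).1
    apply hb₀ (e : ZMod n × ZMod n).1
    have : ((e : ZMod n × ZMod n).1, b₀) = (e : ZMod n × ZMod n) := by
      rw [← hEq]
    rw [this]; exact heS
  have hRadj : ∀ v w, R v w → GH.Adj v w := by
    intro v w hvw
    rw [hGH]
    refine ⟨?_, Or.inl hvw⟩
    intro hEq
    subst hEq
    have h2 : (v : ZMod n × ZMod n).2 = (v : ZMod n × ZMod n).2 + 1 := by
      have := congrArg Prod.snd hvw
      simpa using this
    have h10 : (1 : ZMod n) = 0 := by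
      have := h2.symm
      rwa [left_eq_add] at h2
    apply hSne v
    have : (v : ZMod n × ZMod n).2 - b₀ = ((v : ZMod n × ZMod n).2 - b₀) * 1 := (mul_one _).symm
    rw [h10, mul_zero] at this
    exact sub_eq_zero.mp this
  have hR2 : ∀ v w, GH.Adj v w → R v w ∨ R w v := fun v w h => ((hGH v w).1 h).2
  have hP : ∀ v w, R v w → P w = P v + ((fun e _ => F (e : ZMod n × ZMod n)) v w : G) := by
    intro v w hvw
    have hwS : (w : ZMod n × ZMod n).2 ≠ b₀ := hSne w
    set x := (v : ZMod n × ZMod n).1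
    set y := (v : ZMod n × ZMod n).2
    have hw : (w : ZMod n × ZMod n) = (x, y + 1) := hvw
    have hne : (y - b₀) + 1 ≠ 0 := by
      intro hEq
      apply hwS
      rw [hw]
      have : y + 1 - b₀ = 0 := by rw [← hEq]; ring
      simpa [sub_eq_zero] using this
    have hval : ((y + 1) - b₀).val = (y - b₀).val + 1 := by
      have : (y + 1) - b₀ = (y - b₀) + 1 := by ring
      rw [this]
      exact zmod_val_add_one _ hne
    have hcast : b₀ + (((y - b₀).val : ℕ) : ZMod n) = y := by
      simp [ZMod.natCast_val, ZMod.cast_id]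
    rw [hPdef]
    simp only [hw]
    rw [hval, Finset.sum_range_succ, hcast]
  refine (Equiv.subtypeEquivRight ?_).trans
    (potentialEquiv GH R hR2 hRadj (fun e _ => F (e : ZMod n × ZMod n)) P hP)
  intro h
  constructor
  · intro hh e e' hre
    have h2 : (e : ZMod n × ZMod n) ∈ HE := e.2
    have h1 : (e : ZMod n × ZMod n) ∈ S := ((hHE _).1 h2).1
    have h3 : ((e : ZMod n × ZMod n).1, (e : ZMod n × ZMod n).2 + 1) ∈ HE := by
      rw [← hre]; exact e'.2
    have := hh (e : ZMod n × ZMod n) h1 h2 h3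
    have he : (⟨(e : ZMod n × ZMod n), h2⟩ : ↥HE) = e := Subtype.ext rfl
    have he' : (⟨((e : ZMod n × ZMod n).1, (e : ZMod n × ZMod n).2 + 1), h3⟩ : ↥HE) = e' :=
      Subtype.ext hre.symm
    rw [he, he'] at this
    rw [this, hF]
    simp only []
    rw [dif_pos h1]
    abel
  · intro hh p h1 h2 h3
    have := hh ⟨p, h2⟩ ⟨(p.1, p.2 + 1), h3⟩ rfl
    rw [this, hF]
    simp only []
    rw [dif_pos h1]
    abel

/-- Vertical case. -/
noncomputable def vertEquiv (d : ZMod n → ZMod n → G)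
    (S VE : Set (ZMod n × ZMod n))
    (hVE : ∀ p : ZMod n × ZMod n, p ∈ VE ↔ p ∈ S ∧ (p.1 + 1, p.2) ∈ S)
    (a₀ : ZMod n) (ha₀ : ∀ b, (a₀, b) ∉ S)
    (GV : SimpleGraph ↥VE)
    (hGV : ∀ e e' : ↥VE, GV.Adj e e' ↔ e ≠ e' ∧
      ((e' : ZMod n × ZMod n) = ((e : ZMod n × ZMod n).1 + 1, (e : ZMod n × ZMod n).2) ∨
       (e : ZMod n × ZMod n) = ((e' : ZMod n × ZMod n).1 + 1, (e' : ZMod n × ZMod n).2)))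
    (va : ↥S → G) :
    {h : ↥VE → G // ∀ p : ZMod n × ZMod n, ∀ (h1 : p ∈ S) (h2 : p ∈ VE)
        (h3 : (p.1 + 1, p.2) ∈ VE),
      h ⟨(p.1 + 1, p.2), h3⟩ = h ⟨p, h2⟩ + va ⟨p, h1⟩ + d p.1 p.2} ≃
    (GV.ConnectedComponent → G) := by
  classical
  set F : ZMod n × ZMod n → G :=
    fun p => (if hp : p ∈ S then va ⟨p, hp⟩ else 0) + d p.1 p.2 with hF
  set R : ↥VE → ↥VE → Prop :=
    fun e e' => (e' : ZMod n × ZMod n) =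
      ((e : ZMod n × ZMod n).1 + 1, (e : ZMod n × ZMod n).2) with hR
  set P : ↥VE → G :=
    fun e => ∑ k ∈ Finset.range (((e : ZMod n × ZMod n).1 - a₀).val)
      , F (a₀ + k, (e : ZMod n × ZMod n).2) with hPdef
  have hSne : ∀ e : ↥VE, (e : ZMod n × ZMod n).1 ≠ a₀ := by
    intro e hEq
    have heS : (e : ZMod n × ZMod n) ∈ S := ((hVE _).1 e.2).1
    apply ha₀ (e : ZMod n × ZMod n).2
    have : (a₀, (e : ZMod n × ZMod n).2) = (e : ZMod n × ZMod n) := by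
      rw [← hEq]
    rw [this]; exact heS
  have hRadj : ∀ v w, R v w → GV.Adj v w := by
    intro v w hvw
    rw [hGV]
    refine ⟨?_, Or.inl hvw⟩
    intro hEq
    subst hEq
    have h2 : (v : ZMod n × ZMod n).1 = (v : ZMod n × ZMod n).1 + 1 := by
      have := congrArg Prod.fst hvw
      simpa using this
    have h10 : (1 : ZMod n) = 0 := by
      rwa [left_eq_add] at h2
    apply hSne v
    have : (v : ZMod n × ZMod n).1 - a₀ = ((v : ZMod n × ZMod n).1 - a₀) * 1 := (mul_one _).symm
    rw [h10, mul_zero] at this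
    exact sub_eq_zero.mp this
  have hR2 : ∀ v w, GV.Adj v w → R v w ∨ R w v := fun v w h => ((hGV v w).1 h).2
  have hP : ∀ v w, R v w → P w = P v + ((fun e _ => F (e : ZMod n × ZMod n)) v w : G) := by
    intro v w hvw
    have hwS : (w : ZMod n × ZMod n).1 ≠ a₀ := hSne w
    set x := (v : ZMod n × ZMod n).1
    set y := (v : ZMod n × ZMod n).2
    have hw : (w : ZMod n × ZMod n) = (x + 1, y) := hvw
    have hne : (x - a₀) + 1 ≠ 0 := by
      intro hEq
      apply hwS
      rw [hw]
      have : x + 1 - a₀ = 0 := by rw [← hEq]; ring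
      simpa [sub_eq_zero] using this
    have hval : ((x + 1) - a₀).val = (x - a₀).val + 1 := by
      have : (x + 1) - a₀ = (x - a₀) + 1 := by ring
      rw [this]
      exact zmod_val_add_one _ hne
    have hcast : a₀ + (((x - a₀).val : ℕ) : ZMod n) = x := by
      simp [ZMod.natCast_val, ZMod.cast_id]
    rw [hPdef]
    simp only [hw]
    rw [hval, Finset.sum_range_succ, hcast]
  refine (Equiv.subtypeEquivRight ?_).trans
    (potentialEquiv GV R hR2 hRadj (fun e _ => F (e : ZMod n × ZMod n)) P hP)
  intro h
  constructor
  · intro hh e e' hre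
    have h2 : (e : ZMod n × ZMod n) ∈ VE := e.2
    have h1 : (e : ZMod n × ZMod n) ∈ S := ((hVE _).1 h2).1
    have h3 : ((e : ZMod n × ZMod n).1 + 1, (e : ZMod n × ZMod n).2) ∈ VE := by
      rw [← hre]; exact e'.2
    have := hh (e : ZMod n × ZMod n) h1 h2 h3
    have he : (⟨(e : ZMod n × ZMod n), h2⟩ : ↥VE) = e := Subtype.ext rfl
    have he' : (⟨((e : ZMod n × ZMod n).1 + 1, (e : ZMod n × ZMod n).2), h3⟩ : ↥VE) = e' :=
      Subtype.ext hre.symm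
    rw [he, he'] at this
    rw [this, hF]
    simp only []
    rw [dif_pos h1]
    abel
  · intro hh p h1 h2 h3
    have := hh ⟨p, h2⟩ ⟨(p.1 + 1, p.2), h3⟩ rfl
    rw [this, hF]
    simp only []
    rw [dif_pos h1]
    abel

end HV

theorem torus_assignment_count
    {G : Type*} [AddCommGroup G] [Fintype G] (g : G) (hg : g ≠ 0)
    (n : ℕ) [NeZero n]
    (c d : ZMod n → ZMod n → G)
    (hc : ∀ a b, c a b = 0 ∨ c a b = g) (hd : ∀ a b, d a b = 0 ∨ d a b = g)
    (hsum : (∑ a : ZMod n, ∑ b : ZMod n, c a b) -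
        (∑ a : ZMod n, ∑ b : ZMod n, d a b) = g)
    -- the set `S` of vertex variables, and the sets of horizontal/vertical edge
    -- variables of the induced subgraph `T_{n×n}[S]`
    (S HE VE : Set (ZMod n × ZMod n))
    (hHE : ∀ p : ZMod n × ZMod n, p ∈ HE ↔ p ∈ S ∧ (p.1, p.2 + 1) ∈ S)
    (hVE : ∀ p : ZMod n × ZMod n, p ∈ VE ↔ p ∈ S ∧ (p.1 + 1, p.2) ∈ S)
    -- `S` excludes a cross
    (hcross : ∃ a' b' : ZMod n, (∀ b, (a', b) ∉ S) ∧ (∀ a, (a, b') ∉ S))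
    -- the torus grid graph
    (torus : SimpleGraph (ZMod n × ZMod n))
    (htorus : ∀ p q : ZMod n × ZMod n, torus.Adj p q ↔ p ≠ q ∧
      ((p.1 = q.1 ∧ (p.2 = q.2 + 1 ∨ q.2 = p.2 + 1)) ∨
       (p.2 = q.2 ∧ (p.1 = q.1 + 1 ∨ q.1 = p.1 + 1))))
    -- `S` contains no hole: the induced subgraph on the complement is connected
    (hnohole : (SimpleGraph.induce Sᶜ torus).Connected)
    -- graphs whose connected components are the horizontal/vertical components
    (GH : SimpleGraph ↥HE)
    (hGH : ∀ e e' : ↥HE, GH.Adj e e' ↔ e ≠ e' ∧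
      ((e' : ZMod n × ZMod n) = ((e : ZMod n × ZMod n).1, (e : ZMod n × ZMod n).2 + 1) ∨
       (e : ZMod n × ZMod n) = ((e' : ZMod n × ZMod n).1, (e' : ZMod n × ZMod n).2 + 1)))
    (GV : SimpleGraph ↥VE)
    (hGV : ∀ e e' : ↥VE, GV.Adj e e' ↔ e ≠ e' ∧
      ((e' : ZMod n × ZMod n) = ((e : ZMod n × ZMod n).1 + 1, (e : ZMod n × ZMod n).2) ∨
       (e : ZMod n × ZMod n) = ((e' : ZMod n × ZMod n).1 + 1, (e' : ZMod n × ZMod n).2))) :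
    Nat.card {a : (↥S → G) × (↥HE → G) × (↥VE → G) //
      (∀ p : ZMod n × ZMod n, ∀ (h1 : p ∈ S) (h2 : p ∈ HE)
          (h3 : (p.1, p.2 + 1) ∈ HE),
        a.2.1 ⟨(p.1, p.2 + 1), h3⟩ = a.2.1 ⟨p, h2⟩ + a.1 ⟨p, h1⟩ + c p.1 p.2) ∧
      (∀ p : ZMod n × ZMod n, ∀ (h1 : p ∈ S) (h2 : p ∈ VE)
          (h3 : (p.1 + 1, p.2) ∈ VE),
        a.2.2 ⟨(p.1 + 1, p.2), h3⟩ = a.2.2 ⟨p, h2⟩ + a.1 ⟨p, h1⟩ + d p.1 p.2)} =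
    Fintype.card G ^
      (Nat.card ↥S + Nat.card GH.ConnectedComponent + Nat.card GV.ConnectedComponent) := by
  classical
  obtain ⟨a₀, b₀, ha₀, hb₀⟩ := hcross
  set eH := fun va : ↥S → G => horizEquiv c S HE hHE b₀ hb₀ GH hGH va with heH
  set eV := fun va : ↥S → G => vertEquiv d S VE hVE a₀ ha₀ GV hGV va with heV
  have E : {a : (↥S → G) × (↥HE → G) × (↥VE → G) //
      (∀ p : ZMod n × ZMod n, ∀ (h1 : p ∈ S) (h2 : p ∈ HE)
          (h3 : (p.1, p.2 + 1) ∈ HE),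
        a.2.1 ⟨(p.1, p.2 + 1), h3⟩ = a.2.1 ⟨p, h2⟩ + a.1 ⟨p, h1⟩ + c p.1 p.2) ∧
      (∀ p : ZMod n × ZMod n, ∀ (h1 : p ∈ S) (h2 : p ∈ VE)
          (h3 : (p.1 + 1, p.2) ∈ VE),
        a.2.2 ⟨(p.1 + 1, p.2), h3⟩ = a.2.2 ⟨p, h2⟩ + a.1 ⟨p, h1⟩ + d p.1 p.2)} ≃
      ((↥S → G) × (GH.ConnectedComponent → G) × (GV.ConnectedComponent → G)) :=
    { toFun := fun x => (x.1.1, eH x.1.1 ⟨x.1.2.1, x.2.1⟩, eV x.1.1 ⟨x.1.2.2, x.2.2⟩)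
      invFun := fun y => ⟨(y.1, ((eH y.1).symm y.2.1).1, ((eV y.1).symm y.2.2).1),
        ((eH y.1).symm y.2.1).2, ((eV y.1).symm y.2.2).2⟩
      left_inv := by
        rintro ⟨⟨va, h, v⟩, hH, hV⟩
        apply Subtype.ext
        simp only [Equiv.symm_apply_apply]
      right_inv := by
        rintro ⟨va, φ, ψ⟩
        simp only [Subtype.eta, Equiv.apply_symm_apply] }
  rw [Nat.card_congr E]
  rw [Nat.card_prod, Nat.card_prod, Nat.card_fun, Nat.card_fun, Nat.card_fun,
    Nat.card_eq_fintype_card (α := G), pow_add, pow_add]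
  ring
end
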